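/- arXiv:math-ph/0512080 — 2 statements merged into one kernel-verified Lean document; each statement's English description precedes it below -/
import Mathlib

section
/- Beurling–Ahlfors extension theorem: Let h : ℝ → ℝ be a k-quasisymmetric increasing homeomorphism of ℝ onto ℝ. Then there exist a constant c < 1 and a homeomorphism F of the closed upper half-plane {z ∈ ℂ : Im z ≥ 0} onto itself such that F(x) = h(x) for all x ∈ ℝ, F maps the open upper half-plane {z : Im z > 0} onto itself, and F is real-differentiable at every point z with Im z > 0 with |∂̄F(z)| ≤ c · |∂F(z)|. -/
open Complex Metric Set Filter MeasureTheory

/-- Wirtinger derivative ∂f(z) = (Df(z)(1) − i·Df(z)(i))/2, using the real Fréchet derivative. -/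
noncomputable def wD (f : ℂ → ℂ) (z : ℂ) : ℂ :=
  (fderiv ℝ f z 1 - Complex.I * fderiv ℝ f z Complex.I) / 2

/-- Wirtinger derivative ∂̄f(z) = (Df(z)(1) + i·Df(z)(i))/2, using the real Fréchet derivative. -/
noncomputable def wDbar (f : ℂ → ℂ) (z : ℂ) : ℂ :=
  (fderiv ℝ f z 1 + Complex.I * fderiv ℝ f z Complex.I) / 2

/-- `f` restricts to a homeomorphism of `U` onto `V`. -/
def IsHomeoOn (f : ℂ → ℂ) (U V : Set ℂ) : Prop :=
  ∃ g : ℂ → ℂ, Set.MapsTo f U V ∧ Set.MapsTo g V U ∧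
    ContinuousOn f U ∧ ContinuousOn g V ∧
    (∀ z ∈ U, g (f z) = z) ∧ (∀ w ∈ V, f (g w) = w)

/-- sup_{|w−z|=r} |f(w) − f(z)| -/
noncomputable def sphereSup (f : ℂ → ℂ) (z : ℂ) (r : ℝ) : ℝ :=
  sSup ((fun w => ‖f w - f z‖) '' Metric.sphere z r)

/-- inf_{|w−z|=r} |f(w) − f(z)| -/
noncomputable def sphereInf (f : ℂ → ℂ) (z : ℂ) (r : ℝ) : ℝ :=
  sInf ((fun w => ‖f w - f z‖) '' Metric.sphere z r)

/-- `f` is metrically quasiconformal on `U`: there is a finite `H` bounding, at every point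
of `U`, the limsup as `r → 0⁺` of the circular distortion ratio. -/
def MetricallyQC (f : ℂ → ℂ) (U : Set ℂ) : Prop :=
  ∃ H : ℝ, ∀ z ∈ U,
    Filter.limsup (fun r : ℝ => sphereSup f z r / sphereInf f z r)
      (nhdsWithin 0 (Set.Ioi 0)) ≤ H

/-- `h : ℝ → ℝ` is `k`-quasisymmetric. -/
def QuasiSym (h : ℝ → ℝ) (k : ℝ) : Prop :=
  ∀ x : ℝ, ∀ y : ℝ, 0 < y →
    1 / k ≤ (h (x + y) - h x) / (h x - h (x - y)) ∧
      (h (x + y) - h x) / (h x - h (x - y)) ≤ k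

noncomputable def Hba (h : ℝ → ℝ) (t : ℝ) : ℝ := ∫ s in (0:ℝ)..t, h s

noncomputable def avgBA (h : ℝ → ℝ) (a b : ℝ) : ℝ := (Hba h b - Hba h a) / (b - a)

noncomputable def Fba (h : ℝ → ℝ) : ℂ → ℂ := fun z =>
  if z.im ≤ 0 then ((h z.re : ℝ) : ℂ)
  else ((avgBA h z.re (z.re + z.im) : ℝ) : ℂ) +
    Complex.I * ((avgBA h (z.re + z.im) (z.re + 2*z.im) - avgBA h z.re (z.re + z.im) : ℝ) : ℂ)

section BAlemmas

variable {h : ℝ → ℝ} {a b a' b' : ℝ} (hc : Continuous h) (hmono : StrictMono h)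

include hc in
theorem Hba_sub (a b : ℝ) : Hba h b - Hba h a = ∫ s in a..b, h s := by
  rw [Hba, Hba, ← intervalIntegral.integral_add_adjacent_intervals
    (hc.intervalIntegrable 0 a) (hc.intervalIntegrable a b)]
  ring

include hc in
theorem hasDerivAt_Hba (t : ℝ) : HasDerivAt (Hba h) (h t) t :=
  (hc.integral_hasStrictDerivAt 0 t).hasDerivAt

theorem avg_mul (hab : a < b) : avgBA h a b * (b - a) = Hba h b - Hba h a :=
  div_mul_cancel₀ _ (by linarith)

include hc hmono in
/-- upper bound: average over `[a,b]` is at most `(h(mid)+h(b))/2`. -/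
theorem avg_le (hab : a < b) : avgBA h a b ≤ (h ((a+b)/2) + h b) / 2 := by
  have hm1 : a ≤ (a+b)/2 := by linarith
  have hm2 : (a+b)/2 ≤ b := by linarith
  have e1 : Hba h ((a+b)/2) - Hba h a ≤ ((a+b)/2 - a) * h ((a+b)/2) := by
    rw [Hba_sub hc]
    calc ∫ s in a..((a+b)/2), h s ≤ ∫ s in a..((a+b)/2), h ((a+b)/2) := by
          apply intervalIntegral.integral_mono_on hm1 (hc.intervalIntegrable _ _)
            (intervalIntegrable_const)
          intro t ht; exact hmono.monotone ht.2
      _ = ((a+b)/2 - a) * h ((a+b)/2) := by simp [smul_eq_mul, mul_comm]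
  have e2 : Hba h b - Hba h ((a+b)/2) ≤ (b - (a+b)/2) * h b := by
    rw [Hba_sub hc]
    calc ∫ s in ((a+b)/2)..b, h s ≤ ∫ s in ((a+b)/2)..b, h b := by
          apply intervalIntegral.integral_mono_on hm2 (hc.intervalIntegrable _ _)
            (intervalIntegrable_const)
          intro t ht; exact hmono.monotone ht.2
      _ = (b - (a+b)/2) * h b := by simp [smul_eq_mul, mul_comm]
  rw [avgBA, div_le_iff₀ (by linarith)]
  nlinarith

include hc hmono in
theorem avg_ge (hab : a < b) : (h a + h ((a+b)/2)) / 2 ≤ avgBA h a b := by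
  have hm1 : a ≤ (a+b)/2 := by linarith
  have hm2 : (a+b)/2 ≤ b := by linarith
  have e1 : ((a+b)/2 - a) * h a ≤ Hba h ((a+b)/2) - Hba h a := by
    rw [Hba_sub hc]
    calc ((a+b)/2 - a) * h a = ∫ s in a..((a+b)/2), h a := by simp [smul_eq_mul, mul_comm]
      _ ≤ ∫ s in a..((a+b)/2), h s := by
          apply intervalIntegral.integral_mono_on hm1 (intervalIntegrable_const)
            (hc.intervalIntegrable _ _)
          intro t ht; exact hmono.monotone ht.1
  have e2 : (b - (a+b)/2) * h ((a+b)/2) ≤ Hba h b - Hba h ((a+b)/2) := by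
    rw [Hba_sub hc]
    calc (b - (a+b)/2) * h ((a+b)/2) = ∫ s in ((a+b)/2)..b, h ((a+b)/2) := by
          simp [smul_eq_mul, mul_comm]
      _ ≤ ∫ s in ((a+b)/2)..b, h s := by
          apply intervalIntegral.integral_mono_on hm2 (intervalIntegrable_const)
            (hc.intervalIntegrable _ _)
          intro t ht; exact hmono.monotone ht.1
  rw [avgBA, le_div_iff₀ (by linarith)]
  nlinarith

include hc hmono in
theorem avg_lt_right (hab : a < b) : avgBA h a b < h b := by
  have h1 := avg_le hc hmono hab
  have h2 : h ((a+b)/2) < h b := hmono (by linarith)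
  linarith

include hc hmono in
theorem left_lt_avg (hab : a < b) : h a < avgBA h a b := by
  have h1 := avg_ge hc hmono hab
  have h2 : h a < h ((a+b)/2) := hmono (by linarith)
  linarith

include hc hmono in
/-- moving the left endpoint right strictly increases the average. -/
theorem avg_mono_left (h1 : a < a') (h2 : a' < b) : avgBA h a b < avgBA h a' b := by
  have key : avgBA h a b * (b - a) = avgBA h a a' * (a' - a) + avgBA h a' b * (b - a') := by
    rw [avg_mul (h1.trans h2), avg_mul h1, avg_mul h2]; ring
  have l1 : avgBA h a a' < h a' := avg_lt_right hc hmono h1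
  have l2 : h a' < avgBA h a' b := left_lt_avg hc hmono h2
  nlinarith [sub_pos.mpr h1, sub_pos.mpr h2]

include hc hmono in
theorem avg_mono_right (h1 : a < b) (h2 : b < b') : avgBA h a b < avgBA h a b' := by
  have key : avgBA h a b' * (b' - a) = avgBA h a b * (b - a) + avgBA h b b' * (b' - b) := by
    rw [avg_mul (h1.trans h2), avg_mul h1, avg_mul h2]; ring
  have l1 : avgBA h a b < h b := avg_lt_right hc hmono h1
  have l2 : h b < avgBA h b b' := left_lt_avg hc hmono h2
  nlinarith [sub_pos.mpr h1, sub_pos.mpr h2, sub_pos.mpr (h1.trans h2)]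

include hc hmono in
/-- moving both endpoints (weakly, one strictly) right strictly increases the average. -/
theorem avg_mono2 (ha : a ≤ a') (hb : b ≤ b') (h1 : a < b) (h2 : a' < b')
    (hstr : a < a' ∨ b < b') : avgBA h a b < avgBA h a' b' := by
  rcases le_or_gt b a' with hba | hba
  · calc avgBA h a b < h b := avg_lt_right hc hmono h1
      _ ≤ h a' := hmono.monotone hba
      _ < avgBA h a' b' := left_lt_avg hc hmono h2
  · rcases eq_or_lt_of_le ha with rfl | ha'
    · exact avg_mono_right hc hmono h1 (hstr.resolve_left (lt_irrefl _))
    · calc avgBA h a b < avgBA h a' b := avg_mono_left hc hmono ha' hba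
        _ ≤ avgBA h a' b' := by
            rcases eq_or_lt_of_le hb with rfl | hb'
            · exact le_refl _
            · exact (avg_mono_right hc hmono hba hb').le

include hc hmono in
/-- the two-window injectivity lemma, ordered version. -/
theorem windows_inj_aux {x y x' y' : ℝ} (hy : 0 < y) (hy' : 0 < y') (hyy : y ≤ y')
    (e1 : avgBA h x (x+y) = avgBA h x' (x'+y'))
    (e2 : avgBA h (x+y) (x+2*y) = avgBA h (x'+y') (x'+2*y')) : x = x' ∧ y = y' := by
  rcases eq_or_lt_of_le hyy with rfl | hlt
  · -- same length: x = x'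
    rcases lt_trichotomy x x' with hx | hx | hx
    · exact absurd e1 (ne_of_lt (avg_mono2 hc hmono hx.le (by linarith) (by linarith)
        (by linarith) (Or.inl hx)))
    · exact ⟨hx, rfl⟩
    · exact absurd e1.symm (ne_of_lt (avg_mono2 hc hmono hx.le (by linarith) (by linarith)
        (by linarith) (Or.inl hx)))
  · -- y < y' : derive contradiction
    exfalso
    have hxx : x' < x := by
      by_contra hcon
      push_neg at hcon
      exact absurd e1 (ne_of_lt (avg_mono2 hc hmono hcon (by linarith) (by linarith)
        (by linarith) (Or.inr (by linarith))))
    have hsum : x + y < x' + y' := by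
      by_contra hcon
      push_neg at hcon
      exact absurd e1.symm (ne_of_lt (avg_mono2 hc hmono hxx.le hcon (by linarith)
        (by linarith) (Or.inl hxx)))
    exact absurd e2 (ne_of_lt (avg_mono2 hc hmono hsum.le (by linarith) (by linarith)
      (by linarith) (Or.inl hsum)))

end BAlemmas

theorem wD_eq {F : ℂ → ℂ} {L : ℂ →L[ℝ] ℂ} {z : ℂ} (hF : HasFDerivAt F L z) :
    wD F z = (L 1 - Complex.I * L Complex.I) / 2 := by
  rw [wD, hF.fderiv]

theorem wDbar_eq {F : ℂ → ℂ} {L : ℂ →L[ℝ] ℂ} {z : ℂ} (hF : HasFDerivAt F L z) :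
    wDbar F z = (L 1 + Complex.I * L Complex.I) / 2 := by
  rw [wDbar, hF.fderiv]

theorem fba_hasFDerivAt {h : ℝ → ℝ} (hc : Continuous h) {z : ℂ} (him : 0 < z.im) :
    ∃ L : ℂ →L[ℝ] ℂ, HasFDerivAt (Fba h) L z ∧
      L 1 = Complex.ofReal ((h (z.re+z.im) - h z.re)/z.im)
        + Complex.I * Complex.ofReal ((h (z.re+2*z.im) - 2*h (z.re+z.im) + h z.re)/z.im) ∧
      L Complex.I = Complex.ofReal ((h (z.re+z.im) - avgBA h z.re (z.re+z.im))/z.im)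
        + Complex.I * Complex.ofReal ((2*(h (z.re+2*z.im) - h (z.re+z.im))
            - (avgBA h (z.re+z.im) (z.re+2*z.im) - avgBA h z.re (z.re+z.im)))/z.im) := by
  have hy : z.im ≠ 0 := ne_of_gt him
  have lin1 : HasFDerivAt (fun w : ℂ => w.re + w.im)
      (Complex.reCLM + Complex.imCLM) z := (Complex.reCLM + Complex.imCLM).hasFDerivAt
  have lin2 : HasFDerivAt (fun w : ℂ => w.re + 2*w.im)
      (Complex.reCLM + (2:ℝ) • Complex.imCLM) z :=
    (Complex.reCLM + (2:ℝ) • Complex.imCLM).hasFDerivAt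
  have lin0 : HasFDerivAt (fun w : ℂ => w.re) (Complex.reCLM) z := Complex.reCLM.hasFDerivAt
  have hH1 : HasFDerivAt (fun w : ℂ => Hba h (w.re + w.im))
      (h (z.re + z.im) • (Complex.reCLM + Complex.imCLM)) z :=
    (hasDerivAt_Hba hc (z.re + z.im)).comp_hasFDerivAt (f := fun w : ℂ => w.re + w.im) z lin1
  have hH2 : HasFDerivAt (fun w : ℂ => Hba h (w.re + 2*w.im))
      (h (z.re + 2*z.im) • (Complex.reCLM + (2:ℝ) • Complex.imCLM)) z :=
    (hasDerivAt_Hba hc (z.re + 2*z.im)).comp_hasFDerivAt (f := fun w : ℂ => w.re + 2*w.im) z lin2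
  have hH0 : HasFDerivAt (fun w : ℂ => Hba h w.re) (h z.re • Complex.reCLM) z :=
    (hasDerivAt_Hba hc z.re).comp_hasFDerivAt z lin0
  have hn1 : HasFDerivAt (fun w : ℂ => Hba h (w.re + w.im) - Hba h w.re)
      (h (z.re + z.im) • (Complex.reCLM + Complex.imCLM) - h z.re • Complex.reCLM) z :=
    hH1.sub hH0
  have hn2 : HasFDerivAt (fun w : ℂ => Hba h (w.re + 2*w.im) - 2 * Hba h (w.re + w.im)
        + Hba h w.re)
      (h (z.re + 2*z.im) • (Complex.reCLM + (2:ℝ) • Complex.imCLM)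
        - (2:ℝ) • (h (z.re + z.im) • (Complex.reCLM + Complex.imCLM))
        + h z.re • Complex.reCLM) z := by
    exact (hH2.sub (hH1.const_mul (2:ℝ))).add hH0
  have hinv : HasFDerivAt (fun w : ℂ => (w.im)⁻¹) (-((z.im^2)⁻¹) • Complex.imCLM) z :=
    (hasDerivAt_inv hy).comp_hasFDerivAt z Complex.imCLM.hasFDerivAt
  have hA := hn1.mul hinv
  have hB := hn2.mul hinv
  have hreA := Complex.ofRealCLM.hasFDerivAt.comp z hA
  have hreB := (Complex.ofRealCLM.hasFDerivAt.comp z hB).const_mul Complex.I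
  have hFf := hreA.add hreB
  have heq : Fba h =ᶠ[nhds z] (fun x =>
      (⇑Complex.ofRealCLM ∘ fun y => (Hba h (y.re + y.im) - Hba h y.re) * y.im⁻¹) x +
        Complex.I * (⇑Complex.ofRealCLM ∘ fun y =>
          (Hba h (y.re + 2 * y.im) - 2 * Hba h (y.re + y.im) + Hba h y.re) * y.im⁻¹) x) := by
    have hop : IsOpen {w : ℂ | 0 < w.im} := isOpen_lt continuous_const Complex.continuous_im
    filter_upwards [hop.mem_nhds him] with w hw
    have hw' : ¬ w.im ≤ 0 := not_le.mpr hw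
    have d1 : w.re + w.im - w.re = w.im := by ring
    have d2 : w.re + 2*w.im - (w.re + w.im) = w.im := by ring
    have e1 : avgBA h w.re (w.re + w.im)
        = (Hba h (w.re + w.im) - Hba h w.re) * (w.im)⁻¹ := by
      rw [avgBA, d1, div_eq_mul_inv]
    have e2 : avgBA h (w.re + w.im) (w.re + 2*w.im) - avgBA h w.re (w.re + w.im)
        = (Hba h (w.re + 2*w.im) - 2 * Hba h (w.re + w.im) + Hba h w.re) * (w.im)⁻¹ := by
      rw [avgBA, avgBA, d1, d2, div_sub_div_same, div_eq_mul_inv]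
      congr 1
      ring
    simp only [Fba, if_neg hw', Function.comp_apply, Complex.ofRealCLM_apply]
    rw [e2, e1]
  have hF := hFf.congr_of_eventuallyEq heq
  refine ⟨_, hF, ?_, ?_⟩
  · have d1 : z.re + z.im - z.re = z.im := by ring
    have e1 : avgBA h z.re (z.re + z.im)
        = (Hba h (z.re + z.im) - Hba h z.re) / z.im := by rw [avgBA, d1]
    simp only [ContinuousLinearMap.add_apply, ContinuousLinearMap.coe_comp',
      Function.comp_apply, ContinuousLinearMap.sub_apply,
      ContinuousLinearMap.smul_apply, Complex.reCLM_apply, Complex.imCLM_apply,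
      Complex.ofRealCLM_apply, Complex.one_re, Complex.one_im, Complex.I_re, Complex.I_im,
      ContinuousLinearMap.neg_apply, e1]
    have hyc : (z.im:ℂ) ≠ 0 := Complex.ofReal_ne_zero.mpr hy
    norm_num
    first
    | (field_simp; ring)
    | field_simp
  · have d1 : z.re + z.im - z.re = z.im := by ring
    have d2 : z.re + 2*z.im - (z.re + z.im) = z.im := by ring
    have e1 : avgBA h z.re (z.re + z.im)
        = (Hba h (z.re + z.im) - Hba h z.re) / z.im := by rw [avgBA, d1]
    have e2 : avgBA h (z.re + z.im) (z.re + 2*z.im)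
        = (Hba h (z.re + 2*z.im) - Hba h (z.re + z.im)) / z.im := by rw [avgBA, d2]
    simp only [ContinuousLinearMap.add_apply, ContinuousLinearMap.coe_comp',
      Function.comp_apply, ContinuousLinearMap.sub_apply,
      ContinuousLinearMap.smul_apply, Complex.reCLM_apply, Complex.imCLM_apply,
      Complex.ofRealCLM_apply, Complex.one_re, Complex.one_im, Complex.I_re, Complex.I_im,
      ContinuousLinearMap.neg_apply, e1, e2]
    have hyc : (z.im:ℂ) ≠ 0 := Complex.ofReal_ne_zero.mpr hy
    norm_num
    first
    | (field_simp; ring)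
    | field_simp

theorem qs_pair {h : ℝ → ℝ} {k : ℝ} (hmono : StrictMono h) (hk : 1 ≤ k)
    (hqs : QuasiSym h k) (u d : ℝ) (hd : 0 < d) :
    h (u+d) - h u ≤ k * (h u - h (u-d)) ∧ h u - h (u-d) ≤ k * (h (u+d) - h u) := by
  obtain ⟨l, r⟩ := hqs u d hd
  have r0 : 0 < h u - h (u-d) := sub_pos.mpr (hmono (by linarith))
  have s0 : 0 < h (u+d) - h u := sub_pos.mpr (hmono (by linarith))
  have hk0 : 0 < k := by linarith
  constructor
  · exact (div_le_iff₀ r0).mp r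
  · have l2 := (div_le_div_iff₀ hk0 r0).mp l
    linarith

theorem key_ineq {k a b p q : ℝ} (hk : 1 ≤ k) (ha : 0 < a) (hb : 0 < b)
    (hab1 : a ≤ k*b) (hab2 : b ≤ k*a)
    (hp1 : a/(2*(k+1)) ≤ p) (hp2 : p ≤ a*(2*k+1)/(2*(k+1)))
    (hq1 : b/(2*(k+1)) ≤ q) (hq2 : q ≤ b*(2*k+1)/(2*(k+1))) :
    (a-2*b+p+q)^2 + (b-a+p)^2 ≤ (1 - 2/(9*k*(k+1))) * ((a+2*b-p-q)^2 + (b-a-p)^2) := by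
  have hk0 : 0 < k := by linarith
  have hden : (0:ℝ) < 2*(k+1) := by linarith
  have hp0 : 0 < p := lt_of_lt_of_le (by positivity) hp1
  have hq0 : 0 < q := lt_of_lt_of_le (by positivity) hq1
  have hpa : p ≤ a := by
    refine hp2.trans ?_
    rw [div_le_iff₀ hden]; nlinarith
  have hqb : q ≤ b := by
    refine hq2.trans ?_
    rw [div_le_iff₀ hden]; nlinarith
  have t1 : (a+2*b-p-q)^2 ≤ (a+2*b)^2 := by nlinarith
  have t2 : (b-a-p)^2 ≤ (2*a+b)^2 := by nlinarith
  have t3 : a^2 ≤ k*(a*b) := by nlinarith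
  have t4 : b^2 ≤ k*(a*b) := by nlinarith
  have t5 : a*b ≤ k*(a*b) := by nlinarith
  have hD_le : (a+2*b-p-q)^2 + (b-a-p)^2 ≤ 18*(k*(a*b)) := by nlinarith
  have hbq : b/(2*(k+1)) ≤ b - q := by
    have e : b - b*(2*k+1)/(2*(k+1)) = b/(2*(k+1)) := by field_simp; ring
    linarith
  have hap : a/(2*(k+1)) ≤ a - p := by
    have e : a - a*(2*k+1)/(2*(k+1)) = a/(2*(k+1)) := by field_simp; ring
    linarith
  have hgap : 4*(a*b)/(k+1) ≤ ((a+2*b-p-q)^2 + (b-a-p)^2) - ((a-2*b+p+q)^2 + (b-a+p)^2) := by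
    have hDN : ((a+2*b-p-q)^2 + (b-a-p)^2) - ((a-2*b+p+q)^2 + (b-a+p)^2)
        = 4*(a*(b-q) + b*(a-p)) := by ring
    rw [hDN]
    have e1 : a * (b/(2*(k+1))) ≤ a*(b-q) := by
      apply mul_le_mul_of_nonneg_left hbq ha.le
    have e2 : b * (a/(2*(k+1))) ≤ b*(a-p) := by
      apply mul_le_mul_of_nonneg_left hap hb.le
    have e3 : 4*(a*b)/(k+1) = 4*(a * (b/(2*(k+1))) + b * (a/(2*(k+1)))) := by
      field_simp; ring
    linarith [e1, e2]
  have hepsD : 2/(9*k*(k+1)) * ((a+2*b-p-q)^2 + (b-a-p)^2) ≤ 4*(a*b)/(k+1) := by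
    have e0 : 0 ≤ 2/(9*k*(k+1)) := by positivity
    calc 2/(9*k*(k+1)) * ((a+2*b-p-q)^2 + (b-a-p)^2)
        ≤ 2/(9*k*(k+1)) * (18*(k*(a*b))) := mul_le_mul_of_nonneg_left hD_le e0
      _ = 4*(a*b)/(k+1) := by field_simp; ring
  have efin : (1 - 2/(9*k*(k+1))) * ((a+2*b-p-q)^2 + (b-a-p)^2)
      = ((a+2*b-p-q)^2 + (b-a-p)^2) - 2/(9*k*(k+1)) * ((a+2*b-p-q)^2 + (b-a-p)^2) := by
    ring
  linarith

theorem bound_pq {k s r p : ℝ} (hk : 1 ≤ k) (hsr : s ≤ k*r) (hrs : r ≤ k*s)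
    (hp_lo : s/2 ≤ p) (hp_hi : p ≤ ((s+r)+s)/2) :
    (s+r)/(2*(k+1)) ≤ p ∧ p ≤ (s+r)*(2*k+1)/(2*(k+1)) := by
  have hden : (0:ℝ) < 2*(k+1) := by linarith
  constructor
  · rw [div_le_iff₀ hden]
    have := mul_le_mul_of_nonneg_right hp_lo hden.le
    nlinarith
  · rw [le_div_iff₀ hden]
    have := mul_le_mul_of_nonneg_right hp_hi hden.le
    nlinarith

set_option maxHeartbeats 1000000 in
theorem fba_dilatation {h : ℝ → ℝ} {k : ℝ} (hc : Continuous h) (hmono : StrictMono h)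
    (hk : 1 ≤ k) (hqs : QuasiSym h k) {z : ℂ} (him : 0 < z.im) :
    DifferentiableAt ℝ (Fba h) z ∧
    ‖wDbar (Fba h) z‖
      ≤ Real.sqrt (1 - 2/(9*k*(k+1))) * ‖wD (Fba h) z‖ := by
  obtain ⟨L, hF, hL1, hLI⟩ := fba_hasFDerivAt hc him
  refine ⟨hF.differentiableAt, ?_⟩
  have hy : 0 < z.im := him
  have hyne : z.im ≠ 0 := ne_of_gt hy
  set x := z.re with hxdef
  set y := z.im with hydef
  -- real quantities
  set a := h (x+y) - h x with ha_def
  set b := h (x+2*y) - h (x+y) with hb_def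
  set p := h (x+y) - avgBA h x (x+y) with hp_def
  set q := avgBA h (x+y) (x+2*y) - h (x+y) with hq_def
  have hL1' : L 1 = Complex.ofReal (a/y) + Complex.ofReal ((b-a)/y) * Complex.I := by
    rw [hL1, ha_def, hb_def]
    push_cast
    ring
  have hLI' : L Complex.I
      = Complex.ofReal (p/y) + Complex.ofReal ((2*b-p-q)/y) * Complex.I := by
    rw [hLI, hp_def, hq_def, hb_def]
    push_cast
    ring
  -- abs computations
  have habs1 : ‖wDbar (Fba h) z‖
      = Real.sqrt (((a-2*b+p+q)/y)^2 + ((b-a+p)/y)^2) / 2 := by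
    rw [wDbar_eq hF, hL1', hLI', norm_div, Complex.norm_two]
    congr 1
    have e : (Complex.ofReal (a/y) + Complex.ofReal ((b-a)/y) * Complex.I)
        + Complex.I * (Complex.ofReal (p/y) + Complex.ofReal ((2*b-p-q)/y) * Complex.I)
        = Complex.ofReal ((a-2*b+p+q)/y) + Complex.ofReal ((b-a+p)/y) * Complex.I := by
      simp [Complex.ext_iff]
      constructor <;> (field_simp; try ring)
    rw [e, Complex.norm_add_mul_I]
  have habs2 : ‖wD (Fba h) z‖
      = Real.sqrt (((a+2*b-p-q)/y)^2 + ((b-a-p)/y)^2) / 2 := by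
    rw [wD_eq hF, hL1', hLI', norm_div, Complex.norm_two]
    congr 1
    have e : (Complex.ofReal (a/y) + Complex.ofReal ((b-a)/y) * Complex.I)
        - Complex.I * (Complex.ofReal (p/y) + Complex.ofReal ((2*b-p-q)/y) * Complex.I)
        = Complex.ofReal ((a+2*b-p-q)/y) + Complex.ofReal ((b-a-p)/y) * Complex.I := by
      simp [Complex.ext_iff]
      constructor <;> (field_simp; try ring)
    rw [e, Complex.norm_add_mul_I]
  -- quasisymmetry bounds
  have hxy : x < x + y := by linarith
  have hx2y : x + y < x + 2*y := by linarith
  have ha0 : 0 < a := sub_pos.mpr (hmono hxy)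
  have hb0 : 0 < b := sub_pos.mpr (hmono hx2y)
  have qab := qs_pair hmono hk hqs (x+y) y hy
  rw [show x+y+y = x+2*y by ring, show x+y-y = x by ring] at qab
  have hab1 : a ≤ k*b := qab.2
  have hab2 : b ≤ k*a := qab.1
  -- p bounds
  have q1 := qs_pair hmono hk hqs ((x+(x+y))/2) (y/2) (by linarith)
  rw [show (x+(x+y))/2 + y/2 = x+y by ring, show (x+(x+y))/2 - y/2 = x by ring] at q1
  have hple := avg_le hc hmono hxy
  have hpge := avg_ge hc hmono hxy
  have hbp := bound_pq (s := h (x+y) - h ((x+(x+y))/2)) (r := h ((x+(x+y))/2) - h x)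
    (p := p) hk q1.1 q1.2 (by linarith [hp_def]) (by linarith [hp_def])
  have hp1 : a/(2*(k+1)) ≤ p := by
    rw [show a = (h (x+y) - h ((x+(x+y))/2)) + (h ((x+(x+y))/2) - h x) from
      by rw [ha_def]; ring]
    exact hbp.1
  have hp2 : p ≤ a*(2*k+1)/(2*(k+1)) := by
    rw [show a = (h (x+y) - h ((x+(x+y))/2)) + (h ((x+(x+y))/2) - h x) from
      by rw [ha_def]; ring]
    exact hbp.2
  -- q bounds
  have q2 := qs_pair hmono hk hqs ((x+y+(x+2*y))/2) (y/2) (by linarith)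
  rw [show (x+y+(x+2*y))/2 + y/2 = x+2*y by ring,
    show (x+y+(x+2*y))/2 - y/2 = x+y by ring] at q2
  have hqle := avg_le hc hmono hx2y
  have hqge := avg_ge hc hmono hx2y
  have hbq := bound_pq (s := h ((x+y+(x+2*y))/2) - h (x+y))
    (r := h (x+2*y) - h ((x+y+(x+2*y))/2))
    (p := q) hk q2.2 q2.1 (by linarith [hq_def]) (by linarith [hq_def])
  have hq1 : b/(2*(k+1)) ≤ q := by
    rw [show b = (h ((x+y+(x+2*y))/2) - h (x+y)) + (h (x+2*y) - h ((x+y+(x+2*y))/2)) from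
      by rw [hb_def]; ring]
    exact hbq.1
  have hq2 : q ≤ b*(2*k+1)/(2*(k+1)) := by
    rw [show b = (h ((x+y+(x+2*y))/2) - h (x+y)) + (h (x+2*y) - h ((x+y+(x+2*y))/2)) from
      by rw [hb_def]; ring]
    exact hbq.2
  -- key inequality, scaled by y²
  have hKey := key_ineq hk ha0 hb0 hab1 hab2 hp1 hp2 hq1 hq2
  have hy2 : (0:ℝ) < y^2 := by positivity
  have hscaled : ((a-2*b+p+q)/y)^2 + ((b-a+p)/y)^2
      ≤ (1 - 2/(9*k*(k+1))) * (((a+2*b-p-q)/y)^2 + ((b-a-p)/y)^2) := by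
    rw [div_pow, div_pow, div_pow, div_pow, ← add_div, ← add_div,
      ← mul_div_assoc]
    gcongr
  -- conclude
  have heps : (0:ℝ) ≤ 1 - 2/(9*k*(k+1)) := by
    have hk0 : (0:ℝ) < k := by linarith
    have h9 : (0:ℝ) < 9*k*(k+1) := by positivity
    have : 2/(9*k*(k+1)) ≤ 1 := by
      rw [div_le_one h9]; nlinarith
    linarith
  rw [habs1, habs2]
  have := Real.sqrt_le_sqrt hscaled
  rw [Real.sqrt_mul heps] at this
  linarith

theorem Fba_real {h : ℝ → ℝ} (x : ℝ) : Fba h (x : ℂ) = ((h x : ℝ) : ℂ) := by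
  simp [Fba]

theorem Fba_re {h : ℝ → ℝ} {z : ℂ} (him : 0 < z.im) :
    (Fba h z).re = avgBA h z.re (z.re + z.im) := by
  simp [Fba, not_le.mpr him]

theorem Fba_im {h : ℝ → ℝ} {z : ℂ} (him : 0 < z.im) :
    (Fba h z).im = avgBA h (z.re + z.im) (z.re + 2*z.im) - avgBA h z.re (z.re + z.im) := by
  simp [Fba, not_le.mpr him]

theorem Fba_im_zero {h : ℝ → ℝ} {z : ℂ} (him : z.im = 0) : Fba h z = ((h z.re : ℝ) : ℂ) := by
  simp [Fba, him]

theorem fba_im_pos {h : ℝ → ℝ} (hc : Continuous h) (hmono : StrictMono h) {z : ℂ}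
    (him : 0 < z.im) : 0 < (Fba h z).im := by
  rw [Fba_im him]
  have h1 : avgBA h z.re (z.re + z.im) < h (z.re + z.im) :=
    avg_lt_right hc hmono (by linarith)
  have h2 : h (z.re + z.im) < avgBA h (z.re + z.im) (z.re + 2*z.im) :=
    left_lt_avg hc hmono (by linarith)
  linarith

theorem fba_injOn {h : ℝ → ℝ} (hc : Continuous h) (hmono : StrictMono h) :
    Set.InjOn (Fba h) {z : ℂ | 0 ≤ z.im} := by
  intro z hz w hw he
  simp only [Set.mem_setOf_eq] at hz hw
  rcases eq_or_lt_of_le hz with hz0 | hz0 <;> rcases eq_or_lt_of_le hw with hw0 | hw0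
  · -- both real
    have e1 : Fba h z = ((h z.re : ℝ) : ℂ) := Fba_im_zero hz0.symm
    have e2 : Fba h w = ((h w.re : ℝ) : ℂ) := Fba_im_zero hw0.symm
    rw [e1, e2] at he
    have : h z.re = h w.re := by exact_mod_cast congrArg Complex.re he
    have := hmono.injective this
    apply Complex.ext this (by rw [← hz0, ← hw0])
  · -- z real, w interior: contradiction via im
    exfalso
    have i1 : (Fba h z).im = 0 := by rw [Fba_im_zero hz0.symm]; simp
    have i2 : 0 < (Fba h w).im := fba_im_pos hc hmono hw0
    rw [he] at i1; linarith
  · exfalso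
    have i1 : (Fba h w).im = 0 := by rw [Fba_im_zero hw0.symm]; simp
    have i2 : 0 < (Fba h z).im := fba_im_pos hc hmono hz0
    rw [← he] at i1; linarith
  · -- both interior
    have e1 : avgBA h z.re (z.re + z.im) = avgBA h w.re (w.re + w.im) := by
      rw [← Fba_re hz0, ← Fba_re hw0, he]
    have e2 : avgBA h (z.re + z.im) (z.re + 2*z.im)
        = avgBA h (w.re + w.im) (w.re + 2*w.im) := by
      have := congrArg Complex.im he
      rw [Fba_im hz0, Fba_im hw0] at this
      linarith [e1, this]
    rcases le_total z.im w.im with hle | hle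
    · obtain ⟨hre, him⟩ := windows_inj_aux hc hmono hz0 hw0 hle e1 e2
      exact Complex.ext hre him
    · obtain ⟨hre, him⟩ := windows_inj_aux hc hmono hw0 hz0 hle e1.symm e2.symm
      exact Complex.ext hre.symm him.symm

section Inv
variable {h h1 : ℝ → ℝ} (hmono : StrictMono h) (hrinv : ∀ v, h (h1 v) = v)

include hmono hrinv

theorem h1_mono : Monotone h1 := by
  intro v w hvw
  have : h (h1 v) ≤ h (h1 w) := by rw [hrinv, hrinv]; exact hvw
  exact (hmono.le_iff_le).mp this

theorem le_h1 {t v : ℝ} (ht : h t ≤ v) : t ≤ h1 v := by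
  have : h t ≤ h (h1 v) := by rw [hrinv]; exact ht
  exact (hmono.le_iff_le).mp this

theorem h1_le {t v : ℝ} (ht : v ≤ h t) : h1 v ≤ t := by
  have : h (h1 v) ≤ h t := by rw [hrinv]; exact ht
  exact (hmono.le_iff_le).mp this

end Inv

theorem fba_bound {h h1 : ℝ → ℝ} (hc : Continuous h) (hmono : StrictMono h)
    (hrinv : ∀ v, h (h1 v) = v) {R : ℝ} (hR : 0 ≤ R) (z : ℂ) (hz : 0 ≤ z.im)
    (habs : ‖Fba h z‖ ≤ R) :
    ‖z‖ ≤ |h1 (-R) - 2*(h1 (2*R) - h1 (-4*R))| + |h1 R|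
      + 2*(h1 (2*R) - h1 (-4*R)) := by
  set Yb := 2*(h1 (2*R) - h1 (-4*R)) with hYb
  have hYb0 : 0 ≤ Yb := by
    have := h1_mono hmono hrinv (show -4*R ≤ 2*R by linarith)
    simp only [hYb]; linarith
  -- establish lo ≤ x ≤ hi and 0 ≤ y ≤ Yb
  have key : h1 (-R) - Yb ≤ z.re ∧ z.re ≤ h1 R ∧ z.im ≤ Yb := by
    rcases eq_or_lt_of_le hz with h0 | h0
    · -- real case
      rw [Fba_im_zero h0.symm] at habs
      rw [Complex.norm_real, Real.norm_eq_abs] at habs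
      have h1' : -R ≤ h z.re := by cases abs_le.mp habs; linarith
      have h2' : h z.re ≤ R := (le_abs_self _).trans habs
      refine ⟨?_, le_h1 hmono hrinv h2', by linarith⟩
      have := h1_le hmono hrinv h1'
      linarith
    · -- interior case
      set x := z.re
      set y := z.im
      have hA : |(Fba h z).re| ≤ R := (Complex.abs_re_le_norm _).trans habs
      have hB : |(Fba h z).im| ≤ R := (Complex.abs_im_le_norm _).trans habs
      rw [Fba_re h0] at hA
      rw [Fba_im h0] at hB
      set A := avgBA h x (x+y) with hAdef
      set C := avgBA h (x+y) (x+2*y) with hCdef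
      have hAR : -R ≤ A ∧ A ≤ R := abs_le.mp hA
      have hBR : C - A ≤ R := (le_abs_self _).trans hB
      have hxy : x < x + y := by linarith
      have hx2y : x + y < x + 2*y := by linarith
      have l1 : h x < A := left_lt_avg hc hmono hxy
      have l2 : A < h (x+y) := avg_lt_right hc hmono hxy
      have l3 : h (x+y) < C := left_lt_avg hc hmono hx2y
      have l4 : h (x+y) ≤ 2*R := by linarith [hAR.2]
      have hxhi : x ≤ h1 R := le_h1 hmono hrinv (by linarith [hAR.2])
      have hxyhi : x + y ≤ h1 (2*R) := le_h1 hmono hrinv l4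
      have hmid := avg_le hc hmono hxy
      have l5 : -4*R ≤ h ((x+(x+y))/2) := by linarith [hAR.1]
      have l6 : h1 (-4*R) ≤ (x+(x+y))/2 := h1_le hmono hrinv l5
      have hyY : y ≤ Yb := by simp only [hYb]; linarith
      have l7 : -R ≤ h (x+y) := by linarith [hAR.1]
      have l8 : h1 (-R) ≤ x + y := h1_le hmono hrinv l7
      exact ⟨by linarith, hxhi, hyY⟩
  have htri := Complex.norm_le_abs_re_add_abs_im z
  have him : |z.im| = z.im := abs_of_nonneg hz
  have hre : |z.re| ≤ |h1 (-R) - Yb| + |h1 R| := by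
    rw [abs_le]
    constructor
    · have := neg_abs_le (h1 (-R) - Yb)
      have := abs_nonneg (h1 R)
      linarith [key.1]
    · have := le_abs_self (h1 R)
      have := abs_nonneg (h1 (-R) - Yb)
      linarith [key.2.1]
  linarith [key.2.2]

theorem hHc {h : ℝ → ℝ} (hc : Continuous h) : Continuous (Hba h) :=
  continuous_iff_continuousAt.mpr fun t => ((hasDerivAt_Hba hc t).differentiableAt).continuousAt

theorem fba_surj {h h1 : ℝ → ℝ} (hc : Continuous h) (hmono : StrictMono h)
    (hrinv : ∀ v, h (h1 v) = v) {w : ℂ} (hw : 0 < w.im) :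
    ∃ z : ℂ, 0 < z.im ∧ Fba h z = w := by
  classical
  set A0 := w.re with hA0def
  set B0 := w.im with hB0def
  set x0 := h1 A0 with hx0def
  have hhx0 : h x0 = A0 := hrinv A0
  -- existence of X y
  have hex : ∀ y : ℝ, 0 < y → ∃ x, avgBA h x (x+y) = A0 := by
    intro y hy
    have cont : Continuous (fun x => avgBA h x (x+y)) := by
      simp only [avgBA]
      apply Continuous.div
      · exact ((hHc hc).comp (continuous_id.add continuous_const)).sub (hHc hc)
      · exact (continuous_id.add continuous_const).sub continuous_id
      · intro x
        rw [show x + y - x = y by ring]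
        exact ne_of_gt hy
    have hlow : avgBA h (x0 - y) (x0 - y + y) ≤ A0 := by
      have := avg_lt_right hc hmono (show x0 - y < x0 - y + y by linarith)
      rw [show x0 - y + y = x0 by ring] at this ⊢
      rw [hhx0] at this
      linarith
    have hhigh : A0 ≤ avgBA h x0 (x0 + y) := by
      have := left_lt_avg hc hmono (show x0 < x0 + y by linarith)
      rw [hhx0] at this
      linarith
    have := intermediate_value_Icc (show x0 - y ≤ x0 by linarith) cont.continuousOn
    have hmem : A0 ∈ Set.Icc ((fun x => avgBA h x (x+y)) (x0 - y))
        ((fun x => avgBA h x (x+y)) x0) := ⟨hlow, hhigh⟩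
    obtain ⟨x, _, hx⟩ := this hmem
    exact ⟨x, hx⟩
  set X : ℝ → ℝ := fun y => if hy : 0 < y then (hex y hy).choose else 0 with hXdef
  have hX : ∀ y : ℝ, 0 < y → avgBA h (X y) (X y + y) = A0 := by
    intro y hy
    simp only [hXdef, dif_pos hy]
    exact (hex y hy).choose_spec
  -- monotonicity in x
  have hgmono : ∀ y : ℝ, 0 < y → ∀ x x' : ℝ, x < x' →
      avgBA h x (x+y) < avgBA h x' (x'+y) := by
    intro y hy x x' hxx
    exact avg_mono2 hc hmono hxx.le (by linarith) (by linarith) (by linarith) (Or.inl hxx)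
  -- bounds on X
  have hXlt : ∀ y : ℝ, 0 < y → X y < x0 ∧ x0 < X y + y := by
    intro y hy
    have h1' : h (X y) < A0 := by
      have := left_lt_avg hc hmono (show X y < X y + y by linarith)
      rw [hX y hy] at this; exact this
    have h2' : A0 < h (X y + y) := by
      have := avg_lt_right hc hmono (show X y < X y + y by linarith)
      rw [hX y hy] at this; exact this
    rw [← hhx0] at h1' h2'
    exact ⟨hmono.lt_iff_lt.mp h1', hmono.lt_iff_lt.mp h2'⟩
  -- continuity of X on Ioi 0
  have hXcont : ContinuousOn X (Set.Ioi 0) := by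
    intro y0 hy0
    rw [Metric.continuousWithinAt_iff]
    intro ε hε
    have hy0' : (0:ℝ) < y0 := hy0
    set x0' := X y0 with hx0'def
    have hf1 : ContinuousAt (fun y => avgBA h (x0' - ε/2) (x0' - ε/2 + y)) y0 := by
      simp only [avgBA]
      apply ContinuousAt.div
      · exact (((hHc hc).comp (continuous_const.add continuous_id)).sub
          continuous_const).continuousAt
      · exact ((continuous_const.add continuous_id).sub continuous_const).continuousAt
      · rw [show x0' - ε/2 + y0 - (x0' - ε/2) = y0 by ring]
        exact ne_of_gt hy0'
    have hf2 : ContinuousAt (fun y => avgBA h (x0' + ε/2) (x0' + ε/2 + y)) y0 := by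
      simp only [avgBA]
      apply ContinuousAt.div
      · exact (((hHc hc).comp (continuous_const.add continuous_id)).sub
          continuous_const).continuousAt
      · exact ((continuous_const.add continuous_id).sub continuous_const).continuousAt
      · rw [show x0' + ε/2 + y0 - (x0' + ε/2) = y0 by ring]
        exact ne_of_gt hy0'
    have hv1 : avgBA h (x0' - ε/2) (x0' - ε/2 + y0) < A0 := by
      rw [← hX y0 hy0']
      exact hgmono y0 hy0' _ _ (by linarith)
    have hv2 : A0 < avgBA h (x0' + ε/2) (x0' + ε/2 + y0) := by
      rw [← hX y0 hy0']
      exact hgmono y0 hy0' _ _ (by linarith)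
    have e1 : ∀ᶠ y in nhds y0, avgBA h (x0' - ε/2) (x0' - ε/2 + y) < A0 :=
      hf1.eventually_lt_const hv1
    have e2 : ∀ᶠ y in nhds y0, A0 < avgBA h (x0' + ε/2) (x0' + ε/2 + y) :=
      hf2.eventually_const_lt hv2
    have e3 : ∀ᶠ y in nhds y0, (0:ℝ) < y :=
      Filter.tendsto_id.eventually_const_lt hy0'
    obtain ⟨δ, hδ, hball⟩ := Metric.eventually_nhds_iff.mp (e1.and (e2.and e3))
    refine ⟨δ, hδ, ?_⟩
    intro y _ hdist
    obtain ⟨k1, k2, k3⟩ := hball hdist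
    -- X y ∈ (x0' - ε/2, x0' + ε/2)
    have hXy1 : x0' - ε/2 < X y := by
      by_contra hcon
      push_neg at hcon
      rcases eq_or_lt_of_le hcon with heq | hlt
      · rw [← heq] at k1
        rw [hX y k3] at k1
        linarith
      · have := hgmono y k3 _ _ hlt
        rw [hX y k3] at this
        linarith
    have hXy2 : X y < x0' + ε/2 := by
      by_contra hcon
      push_neg at hcon
      rcases eq_or_lt_of_le hcon with heq | hlt
      · rw [heq] at k2
        rw [hX y k3] at k2
        linarith
      · have := hgmono y k3 _ _ hlt
        rw [hX y k3] at this
        linarith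
    rw [Real.dist_eq, abs_lt]
    constructor <;> [linarith; linarith]
  -- the function b
  set b : ℝ → ℝ := fun y => avgBA h (X y + y) (X y + 2*y) with hbdef
  have hbcont : ContinuousOn b (Set.Ioi 0) := by
    simp only [hbdef, avgBA]
    apply ContinuousOn.div
    · exact ((hHc hc).comp_continuousOn
        (hXcont.add (continuousOn_const.mul continuousOn_id))).sub
        ((hHc hc).comp_continuousOn (hXcont.add continuousOn_id))
    · exact (hXcont.add (continuousOn_const.mul continuousOn_id)).sub
        (hXcont.add continuousOn_id)
    · intro y hy
      rw [show X y + 2*y - (X y + y) = y by ring]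
      exact ne_of_gt hy
  -- small y
  obtain ⟨δ, hδpos, hδ⟩ := Metric.continuousAt_iff.mp (hc.continuousAt (x := x0)) (B0/2)
    (by linarith [hw])
  set y1 := δ/4 with hy1def
  have hy1pos : 0 < y1 := by positivity
  have hb1 : b y1 < A0 + B0 := by
    have hXb := hXlt y1 hy1pos
    have l1 : b y1 < h (X y1 + 2*y1) := by
      simp only [hbdef]
      exact avg_lt_right hc hmono (by linarith)
    have l2 : h (X y1 + 2*y1) ≤ h (x0 + 2*y1) := hmono.monotone (by linarith)
    have l3 : dist (x0 + 2*y1) x0 < δ := by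
      rw [Real.dist_eq, show x0 + 2*y1 - x0 = 2*y1 by ring,
        abs_of_pos (by positivity)]
      simp only [hy1def]
      linarith
    have l4 := hδ l3
    rw [Real.dist_eq] at l4
    have l5 := (abs_lt.mp l4).2
    rw [hhx0] at l5
    linarith
  -- large y threshold
  set R' := A0 + B0 with hR'def
  set Ycrit := 2*(h1 R' - h1 (2*A0 - R')) with hYcritdef
  have hlarge : ∀ y : ℝ, 0 < y → Ycrit < y → A0 + B0 < b y := by
    intro y hy hYy
    have hXb := hXlt y hy
    by_contra hcon
    push_neg at hcon
    have l0 : h (X y + y) < b y := by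
      simp only [hbdef]
      exact left_lt_avg hc hmono (by linarith)
    have l1 : h (X y + y) ≤ R' := by simp only [hR'def]; linarith
    have l2 : X y + y ≤ h1 R' := le_h1 hmono hrinv l1
    have hm := avg_le hc hmono (show X y < X y + y by linarith)
    rw [hX y hy] at hm
    have l3 : 2*A0 - R' ≤ h ((X y + (X y + y))/2) := by linarith
    have l4 : h1 (2*A0 - R') ≤ (X y + (X y + y))/2 := h1_le hmono hrinv l3
    have : y ≤ Ycrit := by simp only [hYcritdef]; linarith
    linarith
  set y2 := max (Ycrit + 1) (y1 + 1) with hy2def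
  have hy2a : Ycrit < y2 := lt_of_lt_of_le (by linarith) (le_max_left _ _)
  have hy12 : y1 < y2 := lt_of_lt_of_le (by linarith) (le_max_right _ _)
  have hy2pos : 0 < y2 := lt_trans hy1pos hy12
  have hb2 : A0 + B0 < b y2 := hlarge y2 hy2pos hy2a
  -- IVT in y
  have hIcc : Set.Icc y1 y2 ⊆ Set.Ioi 0 := fun t ht => lt_of_lt_of_le hy1pos ht.1
  obtain ⟨ys, hysmem, hbys⟩ := intermediate_value_Icc hy12.le (hbcont.mono hIcc)
    ⟨hb1.le, hb2.le⟩
  have hyspos : 0 < ys := lt_of_lt_of_le hy1pos hysmem.1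
  refine ⟨⟨X ys, ys⟩, hyspos, ?_⟩
  have hre : (⟨X ys, ys⟩ : ℂ).re = X ys := rfl
  have him : (⟨X ys, ys⟩ : ℂ).im = ys := rfl
  apply Complex.ext
  · rw [Fba_re (by rw [him]; exact hyspos), hre, him]
    exact hX ys hyspos
  · rw [Fba_im (by rw [him]; exact hyspos), hre, him]
    have e1 := hX ys hyspos
    have e2 : b ys = A0 + B0 := hbys
    simp only [hbdef] at e2
    rw [e1, e2]
    simp only [hB0def]
    ring


theorem fba_contOn {h : ℝ → ℝ} (hc : Continuous h) (hmono : StrictMono h) :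
    ContinuousOn (Fba h) {z : ℂ | 0 ≤ z.im} := by
  intro z hz
  simp only [Set.mem_setOf_eq] at hz
  rcases eq_or_lt_of_le hz with h0 | h0
  · -- boundary point
    rw [Metric.continuousWithinAt_iff]
    intro ε hε
    set x0 := z.re with hx0
    obtain ⟨δ0, hδ0pos, hδ0⟩ := Metric.continuousAt_iff.mp (hc.continuousAt (x := x0))
      (ε/4) (by linarith)
    refine ⟨δ0/4, by positivity, ?_⟩
    intro w hw hdist
    simp only [Set.mem_setOf_eq] at hw
    have hre : |w.re - x0| < δ0/4 := by
      calc |w.re - x0| = |(w - z).re| := by rw [Complex.sub_re]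
        _ ≤ ‖w - z‖ := Complex.abs_re_le_norm _
        _ < δ0/4 := by rw [← Complex.dist_eq]; exact hdist
    have him : w.im < δ0/4 := by
      have : |w.im - z.im| ≤ ‖w - z‖ := by
        rw [← Complex.sub_im]; exact Complex.abs_im_le_norm _
      rw [← h0, sub_zero] at this
      have h2 : |w.im| < δ0/4 := lt_of_le_of_lt this (by rw [← Complex.dist_eq]; exact hdist)
      exact lt_of_le_of_lt (le_abs_self _) h2
    have hFz : Fba h z = ((h x0 : ℝ) : ℂ) := Fba_im_zero h0.symm
    rcases eq_or_lt_of_le hw with hw0 | hw0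
    · -- w on boundary
      rw [Fba_im_zero hw0.symm, hFz, Complex.dist_eq, ← Complex.ofReal_sub,
        Complex.norm_real, Real.norm_eq_abs]
      have : dist w.re x0 < δ0 := by rw [Real.dist_eq]; linarith [hre]
      have := hδ0 this
      rw [Real.dist_eq] at this
      linarith
    · -- w interior
      have b1 : |h w.re - h x0| < ε/4 := by
        have : dist w.re x0 < δ0 := by rw [Real.dist_eq]; linarith [hre]
        have := hδ0 this; rwa [Real.dist_eq] at this
      have b2 : |h (w.re + w.im) - h x0| < ε/4 := by
        have : dist (w.re + w.im) x0 < δ0 := by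
          rw [Real.dist_eq]
          have := abs_add_le (w.re - x0) w.im
          have h3 : |w.im| = w.im := abs_of_pos hw0
          calc |w.re + w.im - x0| = |(w.re - x0) + w.im| := by ring_nf
            _ ≤ |w.re - x0| + |w.im| := abs_add_le _ _
            _ < δ0 := by rw [h3]; linarith
        have := hδ0 this; rwa [Real.dist_eq] at this
      have b3 : |h (w.re + 2*w.im) - h x0| < ε/4 := by
        have : dist (w.re + 2*w.im) x0 < δ0 := by
          rw [Real.dist_eq]
          have h3 : |w.im| = w.im := abs_of_pos hw0
          calc |w.re + 2*w.im - x0| = |(w.re - x0) + 2*w.im| := by ring_nf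
            _ ≤ |w.re - x0| + |2*w.im| := abs_add_le _ _
            _ = |w.re - x0| + 2*w.im := by
                rw [show |2*w.im| = 2*w.im from abs_of_pos (by linarith)]
            _ < δ0 := by linarith
        have := hδ0 this; rwa [Real.dist_eq] at this
      -- avg bounds
      have hxy : w.re < w.re + w.im := by linarith
      have hx2y : w.re + w.im < w.re + 2*w.im := by linarith
      have l1 : h w.re < avgBA h w.re (w.re + w.im) := left_lt_avg hc hmono hxy
      have l2 : avgBA h w.re (w.re + w.im) < h (w.re + w.im) := avg_lt_right hc hmono hxy
      have l3 : h (w.re + w.im) < avgBA h (w.re + w.im) (w.re + 2*w.im) :=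
        left_lt_avg hc hmono hx2y
      have l4 : avgBA h (w.re + w.im) (w.re + 2*w.im) < h (w.re + 2*w.im) :=
        avg_lt_right hc hmono hx2y
      have habs1 := abs_lt.mp b1
      have habs2 := abs_lt.mp b2
      have habs3 := abs_lt.mp b3
      rw [Complex.dist_eq]
      calc ‖Fba h w - Fba h z‖
          ≤ |(Fba h w - Fba h z).re| + |(Fba h w - Fba h z).im| :=
            Complex.norm_le_abs_re_add_abs_im _
        _ < ε := by
            rw [Complex.sub_re, Complex.sub_im, Fba_re hw0, Fba_im hw0, hFz]
            simp only [Complex.ofReal_re, Complex.ofReal_im, sub_zero]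
            have e1 : |avgBA h w.re (w.re + w.im) - h x0| < ε/4 := by
              rw [abs_lt]; constructor <;> linarith
            have e2 : |avgBA h (w.re + w.im) (w.re + 2*w.im)
                - avgBA h w.re (w.re + w.im)| < ε/2 := by
              rw [abs_lt]; constructor <;> linarith
            linarith
  · -- interior point
    obtain ⟨L, hF, -, -⟩ := fba_hasFDerivAt hc h0
    exact hF.differentiableAt.continuousAt.continuousWithinAt

theorem invFunOn_continuousOn_image {f g : ℂ → ℂ} {K : Set ℂ} (hK : IsCompact K)
    (hf : ContinuousOn f K) (hg : ∀ z ∈ K, g (f z) = z) : ContinuousOn g (f '' K) := by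
  rw [continuousOn_iff_isClosed]
  intro t ht
  refine ⟨f '' (K ∩ t), ((hK.inter_right ht).image_of_continuousOn
    (hf.mono Set.inter_subset_left)).isClosed, ?_⟩
  apply Set.eq_of_subset_of_subset
  · rintro w ⟨hwt, ⟨z, hzK, rfl⟩⟩
    rw [Set.mem_preimage, hg z hzK] at hwt
    exact ⟨⟨z, ⟨hzK, hwt⟩, rfl⟩, ⟨z, hzK, rfl⟩⟩
  · rintro w ⟨⟨z, ⟨hzK, hzt⟩, rfl⟩, hw2⟩
    refine ⟨?_, hw2⟩
    show g (f z) ∈ t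
    rw [hg z hzK]
    exact hzt

/-- Beurling–Ahlfors extension theorem: a quasisymmetric increasing homeomorphism of ℝ
extends to a quasiconformal homeomorphism of the closed upper half-plane, whose complex
dilatation is bounded by a constant `c < 1` on the open upper half-plane. -/
theorem beurling_ahlfors_extension
    (h : ℝ → ℝ) (hmono : StrictMono h) (hsurj : Function.Surjective h)
    (k : ℝ) (hk : 1 ≤ k) (hqs : QuasiSym h k) :
    ∃ c : ℝ, c < 1 ∧ ∃ F : ℂ → ℂ,
      IsHomeoOn F {z : ℂ | 0 ≤ z.im} {z : ℂ | 0 ≤ z.im} ∧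
      (∀ x : ℝ, F (x : ℂ) = ((h x : ℝ) : ℂ)) ∧
      F '' {z : ℂ | 0 < z.im} = {z : ℂ | 0 < z.im} ∧
      ∀ z : ℂ, 0 < z.im →
        DifferentiableAt ℝ F z ∧
        ‖wDbar F z‖ ≤ c * ‖wD F z‖ := by
  classical
  have hc : Continuous h :=
    (StrictMono.orderIsoOfSurjective h hmono hsurj).toHomeomorph.continuous
  set h1 : ℝ → ℝ := Function.invFun h with hh1
  have hrinv : ∀ v, h (h1 v) = v := fun v => Function.invFun_eq (hsurj v)
  set S : Set ℂ := {z : ℂ | 0 ≤ z.im} with hSdef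
  have hSclosed : IsClosed S := isClosed_le continuous_const Complex.continuous_im
  have hmapsto : Set.MapsTo (Fba h) S S := by
    intro z hz
    have hz' : 0 ≤ z.im := hz
    rcases eq_or_lt_of_le hz' with h0 | h0
    · show 0 ≤ (Fba h z).im
      rw [Fba_im_zero h0.symm]
      simp
    · exact (fba_im_pos hc hmono h0).le
  have hsurjS : ∀ w ∈ S, ∃ z ∈ S, Fba h z = w := by
    intro w hw
    have hw' : 0 ≤ w.im := hw
    rcases eq_or_lt_of_le hw' with h0 | h0
    · refine ⟨((h1 w.re : ℝ) : ℂ), by simp [hSdef], ?_⟩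
      rw [Fba_real (h1 w.re), hrinv]
      exact (Complex.ext (by simp) (by simp [← h0])).symm
    · obtain ⟨z, hz, he⟩ := fba_surj hc hmono hrinv h0
      exact ⟨z, hz.le, he⟩
  set g := Function.invFunOn (Fba h) S with hgdef
  have hinj := fba_injOn hc hmono
  have hgF : ∀ z ∈ S, g (Fba h z) = z := fun z hz => hinj.leftInvOn_invFunOn hz
  have hFg : ∀ w ∈ S, Fba h (g w) = w := by
    intro w hw
    obtain ⟨z, hz, he⟩ := hsurjS w hw
    exact Function.invFunOn_eq ⟨z, hz, he⟩
  have hgmapsto : Set.MapsTo g S S := by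
    intro w hw
    obtain ⟨z, hz, he⟩ := hsurjS w hw
    exact Function.invFunOn_mem ⟨z, hz, he⟩
  have hFcont := fba_contOn hc hmono
  have hgcont : ContinuousOn g S := by
    intro w0 hw0
    set R := ‖w0‖ + 1 with hR
    have hR0 : 0 ≤ R := by positivity
    set ρ := |h1 (-R) - 2*(h1 (2*R) - h1 (-4*R))| + |h1 R|
      + 2*(h1 (2*R) - h1 (-4*R)) with hρ
    set K := S ∩ Metric.closedBall 0 ρ with hKdef
    have hKcomp : IsCompact K := (isCompact_closedBall 0 ρ).inter_left hSclosed
    have hsub : S ∩ Metric.ball w0 1 ⊆ Fba h '' K := by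
      rintro w ⟨hwS, hwb⟩
      obtain ⟨z, hzS, he⟩ := hsurjS w hwS
      have habsw : ‖w‖ ≤ R := by
        have hd : dist w w0 < 1 := Metric.mem_ball.mp hwb
        calc ‖w‖ = ‖w0 + (w - w0)‖ := by congr 1; ring
          _ ≤ ‖w0‖ + ‖w - w0‖ := norm_add_le _ _
          _ ≤ R := by rw [hR, ← Complex.dist_eq]; linarith
      have hzb := fba_bound hc hmono hrinv hR0 z hzS (by rw [he]; exact habsw)
      refine ⟨z, ⟨hzS, ?_⟩, he⟩
      rw [Metric.mem_closedBall, Complex.dist_eq, sub_zero]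
      exact hzb
    have hcont' : ContinuousOn g (Fba h '' K) :=
      invFunOn_continuousOn_image hKcomp (hFcont.mono Set.inter_subset_left)
        (fun z hz => hgF z hz.1)
    have hwa := (hcont'.mono hsub).continuousWithinAt ⟨hw0, Metric.mem_ball_self one_pos⟩
    exact hwa.mono_of_mem_nhdsWithin (inter_mem_nhdsWithin S (Metric.ball_mem_nhds w0 one_pos))
  refine ⟨Real.sqrt (1 - 2/(9*k*(k+1))), ?_, Fba h,
    ⟨g, hmapsto, hgmapsto, hFcont, hgcont, hgF, hFg⟩,
    fun x => Fba_real x, ?_, ?_⟩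
  · have hk0 : (0:ℝ) < k := lt_of_lt_of_le one_pos hk
    have hpos : 0 < 2/(9*k*(k+1)) := by positivity
    have h9 : (0:ℝ) < 9*k*(k+1) := by positivity
    have heps : (0:ℝ) ≤ 1 - 2/(9*k*(k+1)) := by
      have : 2/(9*k*(k+1)) ≤ 1 := by rw [div_le_one h9]; nlinarith
      linarith
    have hlt : 1 - 2/(9*k*(k+1)) < 1 := by linarith
    have := Real.sqrt_lt_sqrt heps hlt
    rwa [Real.sqrt_one] at this
  · apply Set.eq_of_subset_of_subset
    · rintro w ⟨z, hz, rfl⟩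
      exact fba_im_pos hc hmono hz
    · intro w hw
      obtain ⟨z, hz, he⟩ := fba_surj hc hmono hrinv hw
      exact ⟨z, hz, he⟩
  · intro z hz
    exact fba_dilatation hc hmono hk hqs hz
end

section
/- Quasisymmetric homeomorphisms of the line are closed under composition: if h₁ : ℝ → ℝ is a k₁-quasisymmetric increasing homeomorphism of ℝ onto ℝ and h₂ : ℝ → ℝ is a k₂-quasisymmetric increasing homeomorphism of ℝ onto ℝ, then the composition h₂ ∘ h₁ is quasisymmetric, i.e., there exists k ≥ 1 such that h₂ ∘ h₁ is k-quasisymmetric. -/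
open Complex Metric Set Filter MeasureTheory

lemma qs_upper {h : ℝ → ℝ} {k : ℝ} (hm : StrictMono h) (hqs : QuasiSym h k)
    (x y : ℝ) (hy : 0 < y) : h (x + y) - h x ≤ k * (h x - h (x - y)) := by
  have hd : 0 < h x - h (x - y) := sub_pos.2 (hm (by linarith))
  have h2 := (hqs x y hy).2
  rw [div_le_iff₀ hd] at h2
  nlinarith

lemma qs_lower {h : ℝ → ℝ} {k : ℝ} (hk : 1 ≤ k) (hm : StrictMono h) (hqs : QuasiSym h k)
    (x y : ℝ) (hy : 0 < y) : h x - h (x - y) ≤ k * (h (x + y) - h x) := by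
  have hd : 0 < h x - h (x - y) := sub_pos.2 (hm (by linarith))
  have h1 := (hqs x y hy).1
  rw [div_le_div_iff₀ (by linarith) hd] at h1
  nlinarith

lemma step_up {h : ℝ → ℝ} {k : ℝ} (hk : 1 ≤ k) (hm : StrictMono h) (hqs : QuasiSym h k)
    (b s : ℝ) (hs : 0 < s) :
    ∀ n : ℕ, h (b + ((n : ℝ) + 1) * s) - h (b + (n : ℝ) * s) ≤ k ^ (n + 1) * (h b - h (b - s)) := by
  intro n
  induction n with
  | zero =>
      have := qs_upper hm hqs b s hs
      simpa using this
  | succ n ih =>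
      have H := qs_upper hm hqs (b + ((n : ℝ) + 1) * s) s hs
      have e1 : b + ((n : ℝ) + 1) * s + s = b + (((n : ℝ) + 1) + 1) * s := by ring
      have e2 : b + ((n : ℝ) + 1) * s - s = b + (n : ℝ) * s := by ring
      rw [e1, e2] at H
      have hk0 : (0:ℝ) < k := by linarith
      have : k * (h (b + ((n : ℝ) + 1) * s) - h (b + (n : ℝ) * s))
          ≤ k * (k ^ (n + 1) * (h b - h (b - s))) :=
        mul_le_mul_of_nonneg_left ih hk0.le
      push_cast
      calc h (b + (((n : ℝ) + 1) + 1) * s) - h (b + ((n : ℝ) + 1) * s)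
          ≤ k * (k ^ (n + 1) * (h b - h (b - s))) := le_trans H this
        _ = k ^ (n + 1 + 1) * (h b - h (b - s)) := by ring

lemma chain_up {h : ℝ → ℝ} {k : ℝ} (hk : 1 ≤ k) (hm : StrictMono h) (hqs : QuasiSym h k)
    (b s : ℝ) (hs : 0 < s) (n : ℕ) :
    h (b + (n : ℝ) * s) - h b ≤ (∑ i ∈ Finset.range n, k ^ (i + 1)) * (h b - h (b - s)) := by
  induction n with
  | zero => simp
  | succ n ih =>
      have H := step_up hk hm hqs b s hs n
      rw [Finset.sum_range_succ]
      push_cast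
      nlinarith [H, ih]

lemma step_down {h : ℝ → ℝ} {k : ℝ} (hk : 1 ≤ k) (hm : StrictMono h) (hqs : QuasiSym h k)
    (b t : ℝ) (ht : 0 < t) :
    ∀ n : ℕ, h (b - (n : ℝ) * t) - h (b - ((n : ℝ) + 1) * t) ≤ k ^ (n + 1) * (h (b + t) - h b) := by
  intro n
  induction n with
  | zero =>
      have := qs_lower hk hm hqs b t ht
      have e : b - (1:ℝ) * t = b - t := by ring
      simpa [e] using this
  | succ n ih =>
      have H := qs_lower hk hm hqs (b - ((n : ℝ) + 1) * t) t ht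
      have e1 : b - ((n : ℝ) + 1) * t + t = b - (n : ℝ) * t := by ring
      have e2 : b - ((n : ℝ) + 1) * t - t = b - (((n : ℝ) + 1) + 1) * t := by ring
      rw [e1, e2] at H
      have hk0 : (0:ℝ) < k := by linarith
      have hmul : k * (h (b - (n : ℝ) * t) - h (b - ((n : ℝ) + 1) * t))
          ≤ k * (k ^ (n + 1) * (h (b + t) - h b)) :=
        mul_le_mul_of_nonneg_left ih hk0.le
      push_cast
      calc h (b - ((n : ℝ) + 1) * t) - h (b - (((n : ℝ) + 1) + 1) * t)
          ≤ k * (k ^ (n + 1) * (h (b + t) - h b)) := le_trans H hmul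
        _ = k ^ (n + 1 + 1) * (h (b + t) - h b) := by ring

lemma chain_down {h : ℝ → ℝ} {k : ℝ} (hk : 1 ≤ k) (hm : StrictMono h) (hqs : QuasiSym h k)
    (b t : ℝ) (ht : 0 < t) (n : ℕ) :
    h b - h (b - (n : ℝ) * t) ≤ (∑ i ∈ Finset.range n, k ^ (i + 1)) * (h (b + t) - h b) := by
  induction n with
  | zero => simp
  | succ n ih =>
      have H := step_down hk hm hqs b t ht n
      rw [Finset.sum_range_succ]
      push_cast
      nlinarith [H, ih]

/-- Quasisymmetric increasing homeomorphisms of ℝ are closed under composition. -/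
theorem quasisymmetric_comp
    (h₁ h₂ : ℝ → ℝ)
    (hmono₁ : StrictMono h₁) (hsurj₁ : Function.Surjective h₁)
    (hmono₂ : StrictMono h₂) (hsurj₂ : Function.Surjective h₂)
    (k₁ k₂ : ℝ) (hk₁ : 1 ≤ k₁) (hk₂ : 1 ≤ k₂)
    (hqs₁ : QuasiSym h₁ k₁) (hqs₂ : QuasiSym h₂ k₂) :
    ∃ k : ℝ, 1 ≤ k ∧ QuasiSym (h₂ ∘ h₁) k := by
  set n : ℕ := ⌈k₁⌉₊ with hn
  have hkn : k₁ ≤ (n : ℝ) := Nat.le_ceil k₁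
  have hn1 : 1 ≤ n := Nat.one_le_ceil_iff.2 (by linarith)
  set S : ℝ := ∑ i ∈ Finset.range n, k₂ ^ (i + 1) with hSdef
  have hS1 : 1 ≤ S := by
    have h0 : (0 : ℕ) ∈ Finset.range n := Finset.mem_range.2 hn1
    have hsum := Finset.single_le_sum (f := fun i => k₂ ^ (i + 1))
      (fun i _ => by positivity) h0
    simp only [pow_one, zero_add] at hsum
    linarith
  have hS0 : (0 : ℝ) < S := by linarith
  refine ⟨S, hS1, ?_⟩
  intro x y hy
  set a := h₁ (x - y) with ha
  set b := h₁ x with hb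
  set c := h₁ (x + y) with hc
  have hab : a < b := hmono₁ (by linarith)
  have hbc : b < c := hmono₁ (by linarith)
  -- bounds on the intermediate triple from quasisymmetry of h₁
  have hup : c - b ≤ k₁ * (b - a) := qs_upper hmono₁ hqs₁ x y hy
  have hlo : b - a ≤ k₁ * (c - b) := qs_lower hk₁ hmono₁ hqs₁ x y hy
  have hup' : c - b ≤ (n : ℝ) * (b - a) := by nlinarith
  have hlo' : b - a ≤ (n : ℝ) * (c - b) := by nlinarith
  -- upper estimate: h₂ c - h₂ b ≤ S * (h₂ b - h₂ a)
  have Hup : h₂ c - h₂ b ≤ S * (h₂ b - h₂ a) := by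
    have hc' : c ≤ b + (n : ℝ) * (b - a) := by linarith
    have hch := chain_up hk₂ hmono₂ hqs₂ b (b - a) (by linarith) n
    have e : b - (b - a) = a := by ring
    rw [e] at hch
    have := hmono₂.monotone hc'
    linarith
  -- lower estimate: h₂ b - h₂ a ≤ S * (h₂ c - h₂ b)
  have Hlo : h₂ b - h₂ a ≤ S * (h₂ c - h₂ b) := by
    have ha' : b - (n : ℝ) * (c - b) ≤ a := by linarith
    have hch := chain_down hk₂ hmono₂ hqs₂ b (c - b) (by linarith) n
    have e : b + (c - b) = c := by ring
    rw [e] at hch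
    have := hmono₂.monotone ha'
    linarith
  have hD : 0 < h₂ b - h₂ a := sub_pos.2 (hmono₂ hab)
  have hN : 0 < h₂ c - h₂ b := sub_pos.2 (hmono₂ hbc)
  have egoal : (h₂ ∘ h₁) (x + y) - (h₂ ∘ h₁) x = h₂ c - h₂ b := rfl
  have egoal2 : (h₂ ∘ h₁) x - (h₂ ∘ h₁) (x - y) = h₂ b - h₂ a := rfl
  rw [egoal, egoal2]
  constructor
  · rw [div_le_div_iff₀ hS0 hD]
    nlinarith
  · rw [div_le_iff₀ hD]
    linarith
end
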